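/- Let c_n = ∏_{j=1}^n (1+α_j) and, for vectors μ₀ ∈ ℝ^d and observations y₁,…,y_n ∈ ℝ^d, define μ_n recursively by (Σ_{n-1}⁻¹ + R⁻¹) μ_n = Σ_{n-1}⁻¹ μ_{n-1} + R⁻¹ y_n. Then for every n ≥ 1: μ_n = c_n⁻¹ Σ_n Σ₀⁻¹ μ₀ + ( I − c_n⁻¹ Σ_n Σ₀⁻¹ ) · ( Σ_{j=1}^n ∏_{k=0}^{j-1}(1+α_k) y_j ) / ( Σ_{j=1}^n ∏_{k=0}^{j-1}(1+α_k) ), where Σ_n = c_n R(R + s_n Σ₀)⁻¹ Σ₀ with s_n = Σ_{j=1}^n ∏_{k=0}^{j-1}(1+α_k). -/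

import Mathlib

open Matrix Finset

private lemma psd_smul {d : ℕ} {M : Matrix (Fin d) (Fin d) ℝ} (hM : M.PosSemidef)
    {s : ℝ} (hs : 0 ≤ s) : (s • M).PosSemidef := by
  exact hM.smul hs

private lemma pd_smul {d : ℕ} {M : Matrix (Fin d) (Fin d) ℝ} (hM : M.PosDef)
    {s : ℝ} (hs : 0 < s) : (s • M).PosDef := by
  exact hM.smul hs

/-- `R (R+Σ)⁻¹ Σ = (Σ⁻¹ + R⁻¹)⁻¹` for posdef `R`, `Σ`. -/
private lemma key3 {d : ℕ} {R Sg : Matrix (Fin d) (Fin d) ℝ} (hR : R.PosDef)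
    (hSg : Sg.PosDef) : R * (R + Sg)⁻¹ * Sg = (Sg⁻¹ + R⁻¹)⁻¹ := by
  have hRd : IsUnit R.det := hR.det_pos.ne'.isUnit
  have hSd : IsUnit Sg.det := hSg.det_pos.ne'.isUnit
  have h : Sg⁻¹ + R⁻¹ = Sg⁻¹ * (R + Sg) * R⁻¹ := by
    rw [mul_add, add_mul, Matrix.mul_assoc, Matrix.mul_nonsing_inv _ hRd,
      Matrix.nonsing_inv_mul _ hSd, Matrix.mul_one, Matrix.one_mul, add_comm]
  rw [h, Matrix.mul_inv_rev, Matrix.mul_inv_rev, Matrix.nonsing_inv_nonsing_inv _ hRd,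
    Matrix.nonsing_inv_nonsing_inv _ hSd, Matrix.mul_assoc]

private lemma smul_inv_eq {d : ℕ} (a : ℝ) (M : Matrix (Fin d) (Fin d) ℝ)
    (ha : a ≠ 0) (hM : IsUnit M.det) : (a • M)⁻¹ = a⁻¹ • M⁻¹ :=
  Matrix.inv_eq_left_inv (by
    rw [smul_mul_smul_comm, Matrix.nonsing_inv_mul _ hM, inv_mul_cancel₀ ha, one_smul])

theorem stmt_1 {d : ℕ} (hd : 1 ≤ d)
    (R S0 : Matrix (Fin d) (Fin d) ℝ) (hR : R.PosDef) (hS0pd : S0.PosDef)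
    (α : ℕ → ℝ) (hα0 : α 0 = 0) (hαnn : ∀ n, 0 ≤ α n)
    (S : ℕ → Matrix (Fin d) (Fin d) ℝ) (hS0 : S 0 = S0)
    (hrec : ∀ n, S (n + 1) = (1 + α (n + 1)) • (R * (R + S n)⁻¹ * S n))
    (μ : ℕ → Fin d → ℝ) (μ0 : Fin d → ℝ) (hμ0 : μ 0 = μ0)
    (y : ℕ → Fin d → ℝ)
    (hμrec : ∀ n, ((S n)⁻¹ + R⁻¹).mulVec (μ (n + 1)) =
      (S n)⁻¹.mulVec (μ n) + R⁻¹.mulVec (y (n + 1))) :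
    ∀ n, 1 ≤ n →
      μ n =
        ((∏ j ∈ Icc 1 n, (1 + α j))⁻¹ •
            (((∏ j ∈ Icc 1 n, (1 + α j)) •
              (R * (R + (∑ j ∈ Icc 1 n, ∏ k ∈ range j, (1 + α k)) • S0)⁻¹ * S0)) *
              S0⁻¹)).mulVec μ0
        + ((1 : Matrix (Fin d) (Fin d) ℝ) -
            (∏ j ∈ Icc 1 n, (1 + α j))⁻¹ •
              (((∏ j ∈ Icc 1 n, (1 + α j)) •
                (R * (R + (∑ j ∈ Icc 1 n, ∏ k ∈ range j, (1 + α k)) • S0)⁻¹ * S0)) *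
                S0⁻¹)).mulVec
            ((∑ j ∈ Icc 1 n, ∏ k ∈ range j, (1 + α k))⁻¹ •
              ∑ j ∈ Icc 1 n, (∏ k ∈ range j, (1 + α k)) • y j) := by
  -- setup
  set c : ℕ → ℝ := fun n => ∏ k ∈ range (n + 1), (1 + α k) with hc_def
  set s : ℕ → ℝ := fun n => ∑ j ∈ range n, c j with hs_def
  set P : ℕ → Matrix (Fin d) (Fin d) ℝ := fun n => S0⁻¹ + s n • R⁻¹ with hP_def
  set v : ℕ → Fin d → ℝ := fun n => ∑ j ∈ range n, c j • y (j + 1) with hv_def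
  have hRd : IsUnit R.det := hR.det_pos.ne'.isUnit
  have hS0d : IsUnit S0.det := hS0pd.det_pos.ne'.isUnit
  have hone : ∀ k, 0 < 1 + α k := fun k => by linarith [hαnn k]
  have hc_pos : ∀ n, 0 < c n := fun n => Finset.prod_pos fun k _ => hone k
  have hs_nonneg : ∀ n, 0 ≤ s n := fun n => Finset.sum_nonneg fun j _ => (hc_pos j).le
  have hP_pd : ∀ n, (P n).PosDef := fun n =>
    hS0pd.inv.add_posSemidef (psd_smul hR.inv.posSemidef (hs_nonneg n))
  have hP_d : ∀ n, IsUnit (P n).det := fun n => (hP_pd n).det_pos.ne'.isUnit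
  have hs_succ : ∀ n, s (n + 1) = s n + c n := fun n => Finset.sum_range_succ c n
  have hc_succ : ∀ n, c (n + 1) = c n * (1 + α (n + 1)) := fun n =>
    Finset.prod_range_succ _ (n + 1)
  have hP_succ : ∀ n, P (n + 1) = P n + c n • R⁻¹ := by
    intro n
    simp only [hP_def, hs_succ n, add_smul]
    rw [add_assoc]
  -- closed form of the covariances
  have hS_closed : ∀ n, S n = c n • (P n)⁻¹ := by
    intro n
    induction n with
    | zero =>
      have h0 : s 0 = 0 := by simp [hs_def]
      have hc0 : c 0 = 1 := by simp [hc_def, hα0]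
      rw [hS0, hc0, one_smul, hP_def]
      simp only [h0, zero_smul, add_zero]
      rw [Matrix.nonsing_inv_nonsing_inv _ hS0d]
    | succ n ih =>
      have hcne : (c n) ≠ 0 := (hc_pos n).ne'
      haveI : Invertible (c n) := invertibleOfNonzero hcne
      have hSn_pd : (S n).PosDef := ih ▸ pd_smul (hP_pd n).inv (hc_pos n)
      have h1 : (S n)⁻¹ = (c n)⁻¹ • P n := by
        rw [ih, smul_inv_eq _ _ hcne (Matrix.isUnit_nonsing_inv_det _ (hP_d n)),
          Matrix.nonsing_inv_nonsing_inv _ (hP_d n)]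
      have h2 : (S n)⁻¹ + R⁻¹ = (c n)⁻¹ • P (n + 1) := by
        rw [h1, hP_succ n]
        match_scalars <;> field_simp
      rw [hrec n, key3 hR hSn_pd, h2]
      rw [smul_inv_eq _ _ (inv_ne_zero hcne) (hP_d (n + 1)), inv_inv, smul_smul,
        hc_succ n, mul_comm]
  have hSinv : ∀ n, (S n)⁻¹ = (c n)⁻¹ • P n := by
    intro n
    have hcne : (c n) ≠ 0 := (hc_pos n).ne'
    rw [hS_closed n, smul_inv_eq _ _ hcne (Matrix.isUnit_nonsing_inv_det _ (hP_d n)),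
      Matrix.nonsing_inv_nonsing_inv _ (hP_d n)]
  have hSsum : ∀ n, (S n)⁻¹ + R⁻¹ = (c n)⁻¹ • P (n + 1) := by
    intro n
    have hcne : (c n) ≠ 0 := (hc_pos n).ne'
    rw [hSinv n, hP_succ n]
    match_scalars <;> field_simp
  -- the mean recursion in closed form
  have hμP : ∀ n, (P n).mulVec (μ n) = S0⁻¹.mulVec μ0 + R⁻¹.mulVec (v n) := by
    intro n
    induction n with
    | zero =>
      have h0 : v 0 = 0 := by simp [hv_def]
      have h0' : s 0 = 0 := by simp [hs_def]
      rw [h0, Matrix.mulVec_zero, add_zero, hμ0, hP_def]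
      simp only [h0', zero_smul, add_zero]
    | succ n ih =>
      have hcne : (c n) ≠ 0 := (hc_pos n).ne'
      have h1 := hμrec n
      rw [hSsum n, hSinv n, smul_mulVec, smul_mulVec] at h1
      have h2 : (P (n + 1)).mulVec (μ (n + 1)) =
          (P n).mulVec (μ n) + c n • R⁻¹.mulVec (y (n + 1)) := by
        have := congrArg (fun w => (c n) • w) h1
        simpa [smul_smul, mul_inv_cancel₀ hcne, smul_add] using this
      rw [h2, ih, hv_def]
      simp only [Finset.sum_range_succ]
      rw [Matrix.mulVec_add, Matrix.mulVec_smul, add_assoc]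
  -- conversions of index conventions
  have hc_eq : ∀ n, (∏ j ∈ Icc 1 n, (1 + α j)) = c n := by
    intro n
    rw [hc_def]
    simp only
    rw [Finset.prod_range_succ' (fun k => 1 + α k) n, hα0]
    rw [show Icc 1 n = Ico 1 (n + 1) from (Finset.Ico_add_one_right_eq_Icc 1 n).symm,
      Finset.prod_Ico_eq_prod_range]
    simp [add_comm]
  have hs_eq : ∀ n, (∑ j ∈ Icc 1 n, ∏ k ∈ range j, (1 + α k)) = s n := by
    intro n
    rw [hs_def, show Icc 1 n = Ico 1 (n + 1) from (Finset.Ico_add_one_right_eq_Icc 1 n).symm,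
      Finset.sum_Ico_eq_sum_range]
    simp only [Nat.add_sub_cancel]
    refine Finset.sum_congr rfl fun j _ => ?_
    simp [hc_def, add_comm]
  have hv_eq : ∀ n, (∑ j ∈ Icc 1 n, (∏ k ∈ range j, (1 + α k)) • y j) = v n := by
    intro n
    rw [hv_def, show Icc 1 n = Ico 1 (n + 1) from (Finset.Ico_add_one_right_eq_Icc 1 n).symm,
      Finset.sum_Ico_eq_sum_range]
    simp only [Nat.add_sub_cancel]
    refine Finset.sum_congr rfl fun j _ => ?_
    simp [hc_def, add_comm]
  -- final computation
  intro n hn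
  have hs_pos : 0 < s n :=
    Finset.sum_pos (fun j _ => hc_pos j) (Finset.nonempty_range_iff.mpr (by omega))
  have hcne : (c n) ≠ 0 := (hc_pos n).ne'
  rw [hc_eq n, hs_eq n, hv_eq n]
  -- simplify the matrix A
  have hA : (c n)⁻¹ • ((c n • (R * (R + s n • S0)⁻¹ * S0)) * S0⁻¹) = (P n)⁻¹ * S0⁻¹ := by
    rw [Matrix.smul_mul, smul_smul, inv_mul_cancel₀ hcne, one_smul,
      Matrix.mul_assoc, Matrix.mul_assoc, Matrix.mul_nonsing_inv _ hS0d, Matrix.mul_one]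
    have h1 : S0 * P n = (R + s n • S0) * R⁻¹ := by
      simp only [hP_def]
      rw [Matrix.mul_add, Matrix.mul_smul, Matrix.mul_nonsing_inv _ hS0d, Matrix.add_mul,
        Matrix.smul_mul, Matrix.mul_nonsing_inv _ hRd]
    have h2 := congrArg (fun M : Matrix (Fin d) (Fin d) ℝ => M⁻¹) h1
    simp only [Matrix.mul_inv_rev, Matrix.nonsing_inv_nonsing_inv _ hRd] at h2
    exact h2.symm
  rw [hA]
  have hB : (1 : Matrix (Fin d) (Fin d) ℝ) - (P n)⁻¹ * S0⁻¹ = s n • ((P n)⁻¹ * R⁻¹) := by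
    have h1 : (P n)⁻¹ * P n = 1 := Matrix.nonsing_inv_mul _ (hP_d n)
    calc (1 : Matrix (Fin d) (Fin d) ℝ) - (P n)⁻¹ * S0⁻¹
        = (P n)⁻¹ * P n - (P n)⁻¹ * S0⁻¹ := by rw [h1]
      _ = (P n)⁻¹ * (P n - S0⁻¹) := by rw [Matrix.mul_sub]
      _ = (P n)⁻¹ * (s n • R⁻¹) := by simp only [hP_def]; rw [add_sub_cancel_left]
      _ = s n • ((P n)⁻¹ * R⁻¹) := by rw [Matrix.mul_smul]
  rw [hB]
  have hμn : μ n = (P n)⁻¹.mulVec (S0⁻¹.mulVec μ0 + R⁻¹.mulVec (v n)) := by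
    rw [← hμP n, Matrix.mulVec_mulVec, Matrix.nonsing_inv_mul _ (hP_d n), Matrix.one_mulVec]
  rw [hμn, Matrix.mulVec_add]
  congr 1
  · rw [← Matrix.mulVec_mulVec]
  · rw [smul_mulVec, Matrix.mulVec_smul, smul_smul, mul_inv_cancel₀ hs_pos.ne',
      one_smul, ← Matrix.mulVec_mulVec]
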